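/- There exists an absolute constant c ≥ 1 such that for every a with 0 < a ≤ 1 and every v > 0 with a·v ≤ 2, c⁻¹ · a²/((log a)² + 1) ≤ ∫_0^a e^{−v·u} · u/((log u)² + 1) du ≤ c · a²/((log a)² + 1). -/

import Mathlib

open MeasureTheory Real

theorem stmt_4 :
    ∃ c : ℝ, 1 ≤ c ∧ ∀ a v : ℝ, 0 < a → a ≤ 1 → 0 < v → a * v ≤ 2 →
      c⁻¹ * (a ^ 2 / ((Real.log a) ^ 2 + 1))
        ≤ (∫ u in Set.Ioc (0:ℝ) a, Real.exp (-(v * u)) * u / ((Real.log u) ^ 2 + 1)) ∧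
      (∫ u in Set.Ioc (0:ℝ) a, Real.exp (-(v * u)) * u / ((Real.log u) ^ 2 + 1))
        ≤ c * (a ^ 2 / ((Real.log a) ^ 2 + 1)) := by
  refine ⟨8 * Real.exp 2, by nlinarith [Real.one_le_exp (by norm_num : (0:ℝ) ≤ 2)], ?_⟩
  intro a v ha ha1 hv hav
  have hL0 : Real.log a ≤ 0 := Real.log_nonpos ha.le ha1
  set L : ℝ := Real.log a with hLdef
  have hden : (0:ℝ) < L ^ 2 + 1 := by positivity
  set f : ℝ → ℝ := fun u => Real.exp (-(v * u)) * u / ((Real.log u) ^ 2 + 1) with hf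
  have hmeas : Measurable f := by
    apply Measurable.div
    · exact (Real.measurable_exp.comp (measurable_const.mul measurable_id).neg).mul measurable_id
    · exact ((Real.measurable_log.pow_const 2).add measurable_const)
  have hdenu : ∀ u : ℝ, (0:ℝ) < (Real.log u) ^ 2 + 1 := fun u => by positivity
  have hnonneg : ∀ u : ℝ, 0 ≤ u → 0 ≤ f u := by
    intro u hu
    have := (hdenu u).le
    have := (Real.exp_pos (-(v * u))).le
    positivity
  have hbound : ∀ u ∈ Set.Ioc (0:ℝ) a, f u ≤ u := by
    intro u hu
    have h1 : Real.exp (-(v * u)) ≤ 1 :=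
      Real.exp_le_one_iff.2 (by nlinarith [hu.1, hv])
    have h2 : Real.exp (-(v * u)) * u ≤ u := by nlinarith [hu.1]
    calc f u ≤ Real.exp (-(v * u)) * u := by
          apply div_le_self (mul_nonneg (Real.exp_pos _).le hu.1.le)
          nlinarith [sq_nonneg (Real.log u)]
      _ ≤ u := h2
  have hint : IntegrableOn f (Set.Ioc 0 a) := by
    have hc : IntegrableOn (fun _ : ℝ => a) (Set.Ioc (0:ℝ) a) :=
      integrableOn_const measure_Ioc_lt_top.ne
    refine hc.mono' hmeas.aestronglyMeasurable.restrict ?_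
    filter_upwards [ae_restrict_mem measurableSet_Ioc] with u hu
    rw [Real.norm_eq_abs, abs_of_nonneg (hnonneg u hu.1.le)]
    exact le_trans (hbound u hu) hu.2
  constructor
  · -- lower bound
    have hsub : Set.Ioc (a/2) a ⊆ Set.Ioc 0 a := by
      intro x hx; exact ⟨lt_of_le_of_lt (by linarith) hx.1, hx.2⟩
    have step1 : (∫ u in Set.Ioc (a/2) a, f u) ≤ ∫ u in Set.Ioc (0:ℝ) a, f u := by
      apply setIntegral_mono_set hint
      · filter_upwards [ae_restrict_mem measurableSet_Ioc] with u hu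
        exact hnonneg u hu.1.le
      · exact HasSubset.Subset.eventuallyLE hsub
    set K : ℝ := Real.exp (-2) * (a/2) / (2 * (L ^ 2 + 1)) with hK
    have hptwise : ∀ u ∈ Set.Ioc (a/2) a, K ≤ f u := by
      intro u hu
      have hu0 : 0 < u := lt_of_le_of_lt (by linarith) hu.1
      have h1 : Real.exp (-2) ≤ Real.exp (-(v * u)) := by
        apply Real.exp_le_exp.2
        have : v * u ≤ v * a := by nlinarith [hu.2]
        nlinarith
      have h2 : a / 2 ≤ u := hu.1.le
      -- log bounds
      have hlu1 : Real.log u ≤ L := Real.log_le_log hu0 hu.2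
      have hlu2 : L - Real.log 2 ≤ Real.log u := by
        have : Real.log (a/2) ≤ Real.log u := Real.log_le_log (by positivity) h2
        rwa [Real.log_div ha.ne' (by norm_num)] at this
      have hlog2 : (0:ℝ) ≤ Real.log 2 := Real.log_nonneg one_le_two
      have hlog2' : Real.log 2 < 0.6931471808 := Real.log_two_lt_d9
      have hkey : 0 ≤ (Real.log u - (L - Real.log 2)) * (-(Real.log u + (L - Real.log 2))) :=
        mul_nonneg (by linarith) (by linarith)
      have h3 : (Real.log u) ^ 2 + 1 ≤ 2 * (L ^ 2 + 1) := by
        nlinarith [sq_nonneg (L + Real.log 2), hkey, hlog2, hlog2']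
      calc K ≤ Real.exp (-(v * u)) * u / ((Real.log u) ^ 2 + 1) := by
            apply div_le_div₀ (by positivity) (by nlinarith [Real.exp_pos (-2)]) (hdenu u) h3
        _ = f u := rfl
    have step2 : K * (a/2) ≤ ∫ u in Set.Ioc (a/2) a, f u := by
      have := setIntegral_ge_of_const_le_real (μ := volume) measurableSet_Ioc
        (measure_Ioc_lt_top).ne hptwise (hint.mono_set hsub)
      have hm : volume.real (Set.Ioc (a/2) a) = a / 2 := by
        rw [measureReal_def, Real.volume_Ioc, ENNReal.toReal_ofReal (by linarith)]
        ring
      rwa [hm] at this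
    have hEq : (8 * Real.exp 2)⁻¹ * (a ^ 2 / (L ^ 2 + 1)) = K * (a/2) := by
      rw [hK, Real.exp_neg]
      field_simp
      ring
    calc (8 * Real.exp 2)⁻¹ * (a ^ 2 / (L ^ 2 + 1)) = K * (a/2) := hEq
      _ ≤ ∫ u in Set.Ioc (a/2) a, f u := step2
      _ ≤ ∫ u in Set.Ioc (0:ℝ) a, f u := step1
  · -- upper bound
    have hg : IntegrableOn (fun u : ℝ => u / (L ^ 2 + 1)) (Set.Ioc (0:ℝ) a) :=
      (continuous_id.div_const _).integrableOn_Ioc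
    have step1 : (∫ u in Set.Ioc (0:ℝ) a, f u)
        ≤ ∫ u in Set.Ioc (0:ℝ) a, u / (L ^ 2 + 1) := by
      apply setIntegral_mono_on hint hg measurableSet_Ioc
      intro u hu
      have h1 : Real.exp (-(v * u)) ≤ 1 :=
        Real.exp_le_one_iff.2 (by nlinarith [hu.1, hv])
      have hlu : Real.log u ≤ L := Real.log_le_log hu.1 hu.2
      have h3 : L ^ 2 + 1 ≤ (Real.log u) ^ 2 + 1 := by nlinarith
      exact div_le_div₀ (by nlinarith [hu.1.le]) (by nlinarith [hu.1.le]) hden h3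
    have hcomp : (∫ u in Set.Ioc (0:ℝ) a, u / (L ^ 2 + 1)) = (a ^ 2 / 2) / (L ^ 2 + 1) := by
      rw [MeasureTheory.integral_div]
      congr 1
      rw [← intervalIntegral.integral_of_le ha.le, integral_id]
      norm_num
    have hfinal : (a ^ 2 / 2) / (L ^ 2 + 1) ≤ 8 * Real.exp 2 * (a ^ 2 / (L ^ 2 + 1)) := by
      have h0 : 0 ≤ a ^ 2 / (L ^ 2 + 1) := by positivity
      have he : (1:ℝ) ≤ Real.exp 2 := Real.one_le_exp (by norm_num)
      have : (a ^ 2 / 2) / (L ^ 2 + 1) = (1/2) * (a ^ 2 / (L ^ 2 + 1)) := by ring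
      rw [this]
      nlinarith
    calc (∫ u in Set.Ioc (0:ℝ) a, f u) ≤ _ := step1
      _ = (a ^ 2 / 2) / (L ^ 2 + 1) := hcomp
      _ ≤ _ := hfinal
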